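/- For all integers 2 ≤ k ≤ n, the function B ↦ cot(𝒫_k(B)) is concave on Γ_I: for all Hermitian B, B' ∈ Γ_I and s ∈ [0,1], cot(𝒫_k(s B + (1−s) B')) ≥ s · cot(𝒫_k(B)) + (1−s) · cot(𝒫_k(B')). (For B ∈ Γ_I and k ≥ 2 one has 𝒫_k(B) ∈ (0, π), so the cotangent is defined.) -/

import Mathlib

open Real

/-- `arccot x = π/2 - arctan x`, a strictly decreasing bijection from `ℝ` onto `(0, π)`. -/
noncomputable def arccot (x : ℝ) : ℝ := π / 2 - Real.arctan x

/-- `𝒫_{k,n}(λ)`: the maximum over subsets `I ⊆ {1,…,n}` with `|I| = k-1` of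
`∑_{i ∈ I} arccot (λ i)`. -/
noncomputable def Pfun (n k : ℕ) (lam : Fin n → ℝ) : ℝ :=
  sSup {x : ℝ | ∃ s : Finset (Fin n), s.card = k - 1 ∧ x = ∑ i ∈ s, arccot (lam i)}


open scoped Matrix
/-! ### Scalar trigonometric lemmas -/

lemma arccot_pos (x : ℝ) : 0 < arccot x := by
  have := Real.arctan_lt_pi_div_two x
  unfold arccot; linarith

lemma arccot_lt_pi (x : ℝ) : arccot x < π := by
  have := Real.neg_pi_div_two_lt_arctan x
  have := Real.pi_pos
  unfold arccot; linarith

lemma cot_arccot (x : ℝ) : Real.cot (arccot x) = x := by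
  unfold arccot
  rw [Real.cot_eq_cos_div_sin, Real.cos_pi_div_two_sub, Real.sin_pi_div_two_sub,
    ← Real.tan_eq_sin_div_cos, Real.tan_arctan]

lemma cot_lt_cot {x y : ℝ} (hx : 0 < x) (hy : y < π) (hxy : x < y) :
    Real.cot y < Real.cot x := by
  have hsx : 0 < Real.sin x := Real.sin_pos_of_pos_of_lt_pi hx (hxy.trans hy)
  have hsy : 0 < Real.sin y := Real.sin_pos_of_pos_of_lt_pi (hx.trans hxy) hy
  have key : Real.cot x - Real.cot y = Real.sin (y - x) / (Real.sin x * Real.sin y) := by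
    rw [Real.cot_eq_cos_div_sin, Real.cot_eq_cos_div_sin, Real.sin_sub]
    field_simp
  have hpos : 0 < Real.sin (y - x) :=
    Real.sin_pos_of_pos_of_lt_pi (by linarith) (by linarith)
  nlinarith [div_pos hpos (mul_pos hsx hsy)]

lemma cot_le_cot {x y : ℝ} (hx : 0 < x) (hy : y < π) (hxy : x ≤ y) :
    Real.cot y ≤ Real.cot x := by
  rcases eq_or_lt_of_le hxy with rfl | h
  · exact le_refl _
  · exact (cot_lt_cot hx hy h).le

lemma lt_of_cot_lt {x y : ℝ} (hx : 0 < x) (hx' : x < π) (hy : 0 < y) (hy' : y < π)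
    (h : Real.cot y < Real.cot x) : x < y := by
  by_contra hc
  push_neg at hc
  exact absurd (cot_le_cot hy hx' hc) (not_le.2 h)

/-- For `a, b ∈ (0, π)`: `a + b < π` iff `cot a + cot b > 0`. -/
lemma add_lt_pi_iff {a b : ℝ} (ha : 0 < a) (ha' : a < π) (hb : 0 < b) (hb' : b < π) :
    a + b < π ↔ 0 < Real.cot a + Real.cot b := by
  have hps : 0 < π - b := by linarith
  have hps' : π - b < π := by linarith
  have href : Real.cot (π - b) = - Real.cot b := by
    rw [Real.cot_eq_cos_div_sin, Real.cot_eq_cos_div_sin, Real.cos_pi_sub, Real.sin_pi_sub,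
      neg_div]
  constructor
  · intro h
    have : Real.cot (π - b) < Real.cot a := cot_lt_cot ha hps' (by linarith)
    rw [href] at this; linarith
  · intro h
    have : Real.cot (π - b) < Real.cot a := by rw [href]; linarith
    have := lt_of_cot_lt ha ha' hps hps' this
    linarith

/-- Cotangent addition on `(0,π)` with `a + b < π`. -/
lemma cot_add' {a b : ℝ} (ha : 0 < a) (ha' : a < π) (hb : 0 < b) (hb' : b < π)
    (hab : a + b < π) :
    Real.cot (a + b) = (Real.cot a * Real.cot b - 1) / (Real.cot a + Real.cot b) := by
  have hsa : 0 < Real.sin a := Real.sin_pos_of_pos_of_lt_pi ha ha'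
  have hsb : 0 < Real.sin b := Real.sin_pos_of_pos_of_lt_pi hb hb'
  have hsab : 0 < Real.sin (a + b) := Real.sin_pos_of_pos_of_lt_pi (by linarith) hab
  rw [Real.cot_eq_cos_div_sin a, Real.cot_eq_cos_div_sin b, Real.cot_eq_cos_div_sin (a+b)]
  have h1 : Real.cos a / Real.sin a + Real.cos b / Real.sin b
      = Real.sin (a+b) / (Real.sin a * Real.sin b) := by
    rw [Real.sin_add]; field_simp; ring
  have h2 : Real.cos a / Real.sin a * (Real.cos b / Real.sin b) - 1
      = Real.cos (a+b) / (Real.sin a * Real.sin b) := by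
    rw [Real.cos_add]; field_simp
  rw [h1, h2, div_div_div_cancel_right₀ ((mul_pos hsa hsb).ne')]

/-! ### Algebraic lemmas on `f (x, y) = (x y - 1) / (x + y)` -/

lemma fmono {x' x y : ℝ} (h : 0 < x' + y) (hx : x' ≤ x) :
    (x' * y - 1) / (x' + y) ≤ (x * y - 1) / (x + y) := by
  have h2 : 0 < x + y := by linarith
  rw [div_le_div_iff₀ h h2]
  nlinarith [mul_nonneg (sub_nonneg.2 hx) (sq_nonneg y)]

lemma combo_pos {p q c d : ℝ} (hp : 0 < p) (hq : 0 < q) (hc : 0 ≤ c) (hd : 0 ≤ d)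
    (hcd : c + d = 1) : 0 < c * p + d * q := by
  rcases eq_or_lt_of_le hc with rfl | hc'
  · have : d = 1 := by linarith
    subst this; linarith
  · nlinarith [mul_pos hc' hp, mul_nonneg hd hq.le]

lemma fconc {x1 y1 x2 y2 c d : ℝ} (h1 : 0 < x1 + y1) (h2 : 0 < x2 + y2)
    (hc : 0 ≤ c) (hd : 0 ≤ d) (hcd : c + d = 1) :
    c * ((x1 * y1 - 1) / (x1 + y1)) + d * ((x2 * y2 - 1) / (x2 + y2)) ≤
      ((c * x1 + d * x2) * (c * y1 + d * y2) - 1) / ((c * x1 + d * x2) + (c * y1 + d * y2)) := by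
  have hs : 0 < (c * x1 + d * x2) + (c * y1 + d * y2) := by
    have := combo_pos h1 h2 hc hd hcd; linarith
  have key : ((c * x1 + d * x2) * (c * y1 + d * y2) - 1) / ((c * x1 + d * x2) + (c * y1 + d * y2))
      - (c * ((x1 * y1 - 1) / (x1 + y1)) + d * ((x2 * y2 - 1) / (x2 + y2)))
      = c * d * ((x1 * y2 - x2 * y1) ^ 2 + ((x1 + y1) - (x2 + y2)) ^ 2) /
        ((x1 + y1) * ((x2 + y2) * ((c * x1 + d * x2) + (c * y1 + d * y2)))) := by
    have hd' : d = 1 - c := by linarith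
    subst hd'
    field_simp
    ring
  have hnn : 0 ≤ c * d * ((x1 * y2 - x2 * y1) ^ 2 + ((x1 + y1) - (x2 + y2)) ^ 2) /
      ((x1 + y1) * ((x2 + y2) * ((c * x1 + d * x2) + (c * y1 + d * y2)))) :=
    div_nonneg (mul_nonneg (mul_nonneg hc hd) (by positivity)) (by positivity)
  linarith

/-! ### The domain `Omega I` and concavity of `cot` of angle sums -/

/-- The domain associated to a finite index set. -/
def Omega {ι : Type*} (I : Finset ι) : Set (ι → ℝ) := {lam | ∑ i ∈ I, arccot (lam i) < π}

/-- cot of the angle sum over `I`. -/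
noncomputable def cotS {ι : Type*} (I : Finset ι) (lam : ι → ℝ) : ℝ :=
  Real.cot (∑ i ∈ I, arccot (lam i))

lemma sum_arccot_pos {ι : Type*} {I : Finset ι} (hne : I.Nonempty) (lam : ι → ℝ) :
    0 < ∑ i ∈ I, arccot (lam i) :=
  Finset.sum_pos (fun _ _ => arccot_pos _) hne

lemma main_ind {ι : Type*} (I : Finset ι) (hne : I.Nonempty) :
    Convex ℝ (Omega I) ∧ ConcaveOn ℝ (Omega I) (cotS I) := by
  induction hne using Finset.Nonempty.cons_induction with
  | singleton a =>
    have hset : Omega ({a} : Finset ι) = Set.univ :=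
      Set.eq_univ_of_forall fun lam => by
        simp only [Omega, Set.mem_setOf_eq, Finset.sum_singleton]
        exact arccot_lt_pi _
    constructor
    · rw [hset]; exact convex_univ
    · refine ⟨by rw [hset]; exact convex_univ, fun x _ y _ c d hc hd hcd => ?_⟩
      simp only [cotS, Finset.sum_singleton, cot_arccot, Pi.add_apply, Pi.smul_apply,
        smul_eq_mul]
      exact le_refl _
  | cons a I ha hne ih =>
    obtain ⟨hconv, hconc⟩ := ih
    have hsum_cons : ∀ lam : ι → ℝ, ∑ i ∈ Finset.cons a I ha, arccot (lam i)
        = arccot (lam a) + ∑ i ∈ I, arccot (lam i) := fun lam => Finset.sum_cons ha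
    have hmemJ : ∀ lam : ι → ℝ, lam ∈ Omega (Finset.cons a I ha) ↔
        (lam ∈ Omega I ∧ 0 < cotS I lam + lam a) := by
      intro lam
      have hpos := sum_arccot_pos hne lam
      have hb := arccot_pos (lam a)
      have hb' := arccot_lt_pi (lam a)
      constructor
      · intro h
        simp only [Omega, Set.mem_setOf_eq, hsum_cons] at h
        have hI : lam ∈ Omega I := by
          simp only [Omega, Set.mem_setOf_eq]; linarith
        have hlt : (∑ i ∈ I, arccot (lam i)) < π := hI
        have := (add_lt_pi_iff hpos hlt hb hb').1 (by linarith)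
        rw [cot_arccot] at this
        exact ⟨hI, by simpa [cotS] using this⟩
      · rintro ⟨hI, hpos'⟩
        have hlt : (∑ i ∈ I, arccot (lam i)) < π := hI
        have := (add_lt_pi_iff hpos hlt hb hb').2 (by
          rw [cot_arccot]; simpa [cotS] using hpos')
        simp only [Omega, Set.mem_setOf_eq, hsum_cons]
        linarith
    have hcotJ : ∀ lam : ι → ℝ, lam ∈ Omega (Finset.cons a I ha) →
        cotS (Finset.cons a I ha) lam
          = (cotS I lam * lam a - 1) / (cotS I lam + lam a) := by
      intro lam hmem
      have hpos := sum_arccot_pos hne lam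
      have hb := arccot_pos (lam a)
      have hb' := arccot_lt_pi (lam a)
      have hI : lam ∈ Omega I := ((hmemJ lam).1 hmem).1
      have hlt : (∑ i ∈ I, arccot (lam i)) < π := hI
      have hJ : (∑ i ∈ I, arccot (lam i)) + arccot (lam a) < π := by
        have := hmem
        simp only [Omega, Set.mem_setOf_eq, hsum_cons] at this
        linarith
      simp only [cotS, hsum_cons, add_comm (arccot (lam a))]
      rw [cot_add' hpos hlt hb hb' hJ, cot_arccot]
    have hconvJ : Convex ℝ (Omega (Finset.cons a I ha)) := by
      intro x hx y hy c d hc hd hcd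
      obtain ⟨hxI, hxpos⟩ := (hmemJ x).1 hx
      obtain ⟨hyI, hypos⟩ := (hmemJ y).1 hy
      have hzI : c • x + d • y ∈ Omega I := hconv hxI hyI hc hd hcd
      have hz : cotS I x * c + cotS I y * d ≤ cotS I (c • x + d • y) := by
        have := hconc.2 hxI hyI hc hd hcd
        simpa [smul_eq_mul, mul_comm] using this
      have hza : (c • x + d • y) a = c * x a + d * y a := by
        simp [smul_eq_mul]
      refine (hmemJ _).2 ⟨hzI, ?_⟩
      have hcomb : 0 < c * (cotS I x + x a) + d * (cotS I y + y a) :=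
        combo_pos hxpos hypos hc hd hcd
      rw [hza]; nlinarith
    refine ⟨hconvJ, hconvJ, ?_⟩
    intro x hx y hy c d hc hd hcd
    obtain ⟨hxI, hxpos⟩ := (hmemJ x).1 hx
    obtain ⟨hyI, hypos⟩ := (hmemJ y).1 hy
    have hzJ : c • x + d • y ∈ Omega (Finset.cons a I ha) := hconvJ hx hy hc hd hcd
    obtain ⟨hzI, hzpos⟩ := (hmemJ _).1 hzJ
    have hz : c * cotS I x + d * cotS I y ≤ cotS I (c • x + d • y) := by
      have := hconc.2 hxI hyI hc hd hcd
      simpa [smul_eq_mul] using this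
    have hza : (c • x + d • y) a = c * x a + d * y a := by simp [smul_eq_mul]
    have hcomb : 0 < (c * cotS I x + d * cotS I y) + (c * x a + d * y a) := by
      have := combo_pos hxpos hypos hc hd hcd
      nlinarith
    calc c • cotS (Finset.cons a I ha) x + d • cotS (Finset.cons a I ha) y
        = c * ((cotS I x * x a - 1) / (cotS I x + x a))
          + d * ((cotS I y * y a - 1) / (cotS I y + y a)) := by
          rw [hcotJ x hx, hcotJ y hy]; simp [smul_eq_mul]
      _ ≤ ((c * cotS I x + d * cotS I y) * (c * x a + d * y a) - 1) /
            ((c * cotS I x + d * cotS I y) + (c * x a + d * y a)) :=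
          fconc hxpos hypos hc hd hcd
      _ ≤ (cotS I (c • x + d • y) * (c * x a + d * y a) - 1) /
            (cotS I (c • x + d • y) + (c * x a + d * y a)) := fmono hcomb hz
      _ = cotS (Finset.cons a I ha) (c • x + d • y) := by
          rw [hcotJ _ hzJ, hza]

/-! ### The minimum `Fmin` over index sets of fixed size -/

section Fdef
variable {ι : Type*} [Fintype ι] [DecidableEq ι] (m : ℕ)

lemma tne (hm : m ≤ Fintype.card ι) :
    (Finset.powersetCard m (Finset.univ : Finset ι)).Nonempty :=
  Finset.powersetCard_nonempty.2 (by simpa using hm)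

/-- `F`: the min over index sets of size `m` of `cot` of angle sums. -/
noncomputable def Fmin (hm : m ≤ Fintype.card ι) (lam : ι → ℝ) : ℝ :=
  (Finset.powersetCard m (Finset.univ : Finset ι)).inf' (tne m hm) (fun I => cotS I lam)

variable (hm : m ≤ Fintype.card ι)

/-- On `Omega univ`, every subset angle sum is `< π`. -/
lemma omega_mono {lam : ι → ℝ} (h : lam ∈ Omega (Finset.univ : Finset ι)) (I : Finset ι) :
    lam ∈ Omega I := by
  simp only [Omega, Set.mem_setOf_eq] at *
  refine lt_of_le_of_lt ?_ h
  exact Finset.sum_le_sum_of_subset_of_nonneg (Finset.subset_univ I)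
    (fun i _ _ => (arccot_pos _).le)

lemma concaveOn_Fmin (hm1 : 1 ≤ m) :
    ConcaveOn ℝ (Omega (Finset.univ : Finset ι)) (Fmin m hm) := by
  have huniv : (Finset.univ : Finset ι).Nonempty := by
    have : Nonempty ι := Fintype.card_pos_iff.1 (by omega)
    exact Finset.univ_nonempty
  have hconvU : Convex ℝ (Omega (Finset.univ : Finset ι)) := (main_ind _ huniv).1
  refine ⟨hconvU, ?_⟩
  intro x hx y hy c d hc hd hcd
  set t := Finset.powersetCard m (Finset.univ : Finset ι)
  obtain ⟨I₀, hI₀, heq⟩ := Finset.exists_mem_eq_inf' (tne m hm) (fun I => cotS I (c • x + d • y))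
  have hI₀ne : I₀.Nonempty := by
    rw [← Finset.card_pos, (Finset.mem_powersetCard_univ).1 hI₀]; omega
  have hconcI := (main_ind I₀ hI₀ne).2
  have h1 : c • cotS I₀ x + d • cotS I₀ y ≤ cotS I₀ (c • x + d • y) :=
    hconcI.2 (omega_mono hx I₀) (omega_mono hy I₀) hc hd hcd
  have h2 : Fmin m hm x ≤ cotS I₀ x := Finset.inf'_le _ hI₀
  have h3 : Fmin m hm y ≤ cotS I₀ y := Finset.inf'_le _ hI₀
  have : Fmin m hm (c • x + d • y) = cotS I₀ (c • x + d • y) := heq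
  rw [this]
  have := add_le_add (mul_le_mul_of_nonneg_left h2 hc) (mul_le_mul_of_nonneg_left h3 hd)
  simp only [smul_eq_mul] at *
  linarith

/-- symmetry of `Fmin` under permutations. -/
lemma Fmin_comp_perm (σ : Equiv.Perm ι) (lam : ι → ℝ) :
    Fmin m hm (lam ∘ σ) = Fmin m hm lam := by
  set t := Finset.powersetCard m (Finset.univ : Finset ι) with ht
  have himg : t.image (fun I => I.image σ) = t := by
    apply Finset.eq_of_subset_of_card_le
    · intro J hJ
      simp only [Finset.mem_image] at hJ
      obtain ⟨I, hI, rfl⟩ := hJ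
      rw [Finset.mem_powersetCard_univ] at *
      rw [Finset.card_image_of_injective _ σ.injective, hI]
    · refine le_of_eq (Finset.card_image_of_injective _ ?_).symm
      intro I J h
      have h' : I.image σ = J.image σ := h
      have : (I.image σ).image σ.symm = (J.image σ).image σ.symm := by rw [h']
      simpa [Finset.image_image, Function.comp_def, Equiv.symm_apply_apply,
        Finset.image_id'] using this
  have key : ∀ I : Finset ι, cotS I (lam ∘ σ) = cotS (I.image σ) lam := by
    intro I
    simp only [cotS]
    rw [Finset.sum_image (fun i _ j _ h => σ.injective h)]
    rfl
  calc Fmin m hm (lam ∘ σ) = t.inf' (tne m hm) (fun I => cotS (I.image σ) lam) := by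
        unfold Fmin; exact Finset.inf'_congr _ rfl (fun I _ => key I)
    _ = (t.image (fun I => I.image σ)).inf' (by rw [himg]; exact tne m hm)
          (fun J => cotS J lam) := by
        rw [Finset.inf'_image]
        rfl
    _ = Fmin m hm lam := by
        unfold Fmin
        congr 1

end Fdef

/-- Link between `Pfun` and `Fmin`. -/
lemma cot_Pfun_eq_Fmin {n k : ℕ} (hk : 2 ≤ k) (hkn : k ≤ n) (lam : Fin n → ℝ)
    (hΓ : (∑ i, arccot (lam i)) < π) :
    Real.cot (Pfun n k lam) = Fmin (k - 1) (by simp; omega) lam := by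
  have hm1 : 1 ≤ k - 1 := by omega
  set t := Finset.powersetCard (k - 1) (Finset.univ : Finset (Fin n)) with ht
  have htne : t.Nonempty := tne (k-1) (by simp; omega)
  have hset : {x : ℝ | ∃ s : Finset (Fin n), s.card = k - 1 ∧ x = ∑ i ∈ s, arccot (lam i)}
      = (fun I => ∑ i ∈ I, arccot (lam i)) '' ↑t := by
    ext x
    simp only [Set.mem_setOf_eq, Set.mem_image, Finset.mem_coe, ht,
      Finset.mem_powersetCard_univ]
    constructor
    · rintro ⟨s, hs, rfl⟩; exact ⟨s, hs, rfl⟩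
    · rintro ⟨s, hs, rfl⟩; exact ⟨s, hs, rfl⟩
  have hPf : Pfun n k lam = t.sup' htne (fun I => ∑ i ∈ I, arccot (lam i)) := by
    rw [Pfun, hset, Finset.sup'_eq_csSup_image]
  have hval : ∀ I ∈ t, 0 < ∑ i ∈ I, arccot (lam i) ∧ (∑ i ∈ I, arccot (lam i)) < π := by
    intro I hI
    have hIne : I.Nonempty := by
      rw [← Finset.card_pos, (Finset.mem_powersetCard_univ).1 hI]; omega
    refine ⟨sum_arccot_pos hIne lam, ?_⟩
    exact omega_mono (by simpa [Omega] using hΓ) I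
  obtain ⟨I₀, hI₀, hs⟩ := Finset.exists_mem_eq_sup' htne (fun I => ∑ i ∈ I, arccot (lam i))
  apply le_antisymm
  · apply Finset.le_inf'
    intro I hI
    rw [hPf]
    exact cot_le_cot (hval I hI).1 (by rw [hs]; exact (hval I₀ hI₀).2)
      (Finset.le_sup' (fun I => ∑ i ∈ I, arccot (lam i)) hI)
  · have : Fmin (k-1) (by simp; omega) lam ≤ cotS I₀ lam := Finset.inf'_le _ hI₀
    rw [hPf, hs]
    exact this

/-! ### The doubly stochastic / Birkhoff step -/

section DS
variable {ι : Type*} [Fintype ι] [DecidableEq ι]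

lemma permMatrix_mulVec (σ : Equiv.Perm ι) (μ : ι → ℝ) :
    σ.permMatrix ℝ *ᵥ μ = μ ∘ σ := by
  funext i
  simp [Matrix.mulVec, dotProduct, PEquiv.toMatrix_apply, Equiv.toPEquiv_apply]

lemma comp_perm_mem_Omega {μ : ι → ℝ} (hμ : μ ∈ Omega (Finset.univ : Finset ι))
    (σ : Equiv.Perm ι) : μ ∘ σ ∈ Omega (Finset.univ : Finset ι) := by
  simp only [Omega, Set.mem_setOf_eq] at *
  rw [show ∑ i, arccot ((μ ∘ σ) i) = ∑ i, arccot (μ i) from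
    Fintype.sum_equiv σ _ _ (fun i => rfl)]
  exact hμ

set_option maxHeartbeats 1000000 in
lemma ds_step (m : ℕ) (hm : m ≤ Fintype.card ι) (hm1 : 1 ≤ m)
    {D : Matrix ι ι ℝ} (hD : D ∈ doublyStochastic ℝ ι) {μ : ι → ℝ}
    (hμ : μ ∈ Omega (Finset.univ : Finset ι)) :
    (D *ᵥ μ) ∈ Omega (Finset.univ : Finset ι) ∧ Fmin m hm μ ≤ Fmin m hm (D *ᵥ μ) := by
  obtain ⟨w, hw0, hw1, hwD⟩ := exists_eq_sum_perm_of_mem_doublyStochastic hD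
  have hDv : D *ᵥ μ = ∑ σ : Equiv.Perm ι, w σ • (μ ∘ σ) := by
    rw [← hwD]
    have : ∀ t : Finset (Equiv.Perm ι),
        (∑ σ ∈ t, w σ • Equiv.Perm.permMatrix ℝ σ) *ᵥ μ = ∑ σ ∈ t, w σ • (μ ∘ σ) := by
      intro t
      induction t using Finset.cons_induction with
      | empty => simp [Matrix.zero_mulVec]
      | cons a t hat ih =>
        rw [Finset.sum_cons, Finset.sum_cons, Matrix.add_mulVec, ih,
          Matrix.smul_mulVec, permMatrix_mulVec]
    exact this Finset.univ
  have hne : (Finset.univ : Finset ι).Nonempty := by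
    have : Nonempty ι := Fintype.card_pos_iff.1 (by omega)
    exact Finset.univ_nonempty
  have hconv : Convex ℝ (Omega (Finset.univ : Finset ι)) := (main_ind _ hne).1
  have hmem : (D *ᵥ μ) ∈ Omega (Finset.univ : Finset ι) := by
    rw [hDv]
    exact hconv.sum_mem (fun σ _ => hw0 σ) hw1 (fun σ _ => comp_perm_mem_Omega hμ σ)
  refine ⟨hmem, ?_⟩
  have hjensen := (concaveOn_Fmin m hm hm1).le_map_sum (fun σ _ => hw0 σ) hw1
    (fun σ _ => comp_perm_mem_Omega hμ σ)
  rw [← hDv] at hjensen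
  calc Fmin m hm μ = ∑ σ : Equiv.Perm ι, w σ • Fmin m hm μ := by
        rw [← Finset.sum_smul, hw1, one_smul]
    _ = ∑ σ : Equiv.Perm ι, w σ • Fmin m hm (μ ∘ σ) := by
        congr 1; funext σ; rw [Fmin_comp_perm]
    _ ≤ Fmin m hm (D *ᵥ μ) := hjensen

end DS

/-! ### Diagonal of a Hermitian matrix in a unitary basis -/

section Diag
variable {ι : Type*} [Fintype ι] [DecidableEq ι]

lemma diag_doublyStochastic {A : Matrix ι ι ℂ} (hA : A.IsHermitian)
    (U : Matrix ι ι ℂ) (hU : U ∈ Matrix.unitaryGroup ι ℂ) :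
    ∃ D ∈ doublyStochastic ℝ ι, ∀ i, (star U * A * U) i i = ((D *ᵥ hA.eigenvalues) i : ℂ) := by
  set V := (Matrix.IsHermitian.eigenvectorUnitary hA : Matrix ι ι ℂ) with hVdef
  have hV : V ∈ Matrix.unitaryGroup ι ℂ := (Matrix.IsHermitian.eigenvectorUnitary hA).2
  set W := star V * U with hWdef
  have hW : W ∈ Matrix.unitaryGroup ι ℂ := mul_mem (Unitary.star_mem hV) hU
  have hWW : star W * W = 1 := (Matrix.mem_unitaryGroup_iff').1 hW
  have hWW' : W * star W = 1 := (Matrix.mem_unitaryGroup_iff).1 hW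
  refine ⟨fun i j => Complex.normSq (W j i), ?_, ?_⟩
  · refine mem_doublyStochastic_iff_sum.2 ?_
    refine ⟨fun i j => Complex.normSq_nonneg _, fun i => ?_, fun j => ?_⟩
    · have := congrFun (congrFun hWW i) i
      simp only [Matrix.mul_apply, Matrix.one_apply_eq, Matrix.star_apply] at this
      have h2 : ((∑ j, Complex.normSq (W j i) : ℝ) : ℂ) = 1 := by
        rw [← this]
        push_cast
        refine Finset.sum_congr rfl fun j _ => ?_
        rw [Complex.normSq_eq_conj_mul_self, Complex.star_def]
      exact_mod_cast h2
    · have := congrFun (congrFun hWW' j) j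
      simp only [Matrix.mul_apply, Matrix.one_apply_eq, Matrix.star_apply] at this
      have h2 : ((∑ i, Complex.normSq (W j i) : ℝ) : ℂ) = 1 := by
        rw [← this]
        push_cast
        refine Finset.sum_congr rfl fun i _ => ?_
        rw [Complex.normSq_eq_conj_mul_self, Complex.star_def]
        ring
      exact_mod_cast h2
  · intro i
    have hspec : star U * A * U
        = star W * Matrix.diagonal (Complex.ofReal ∘ hA.eigenvalues) * W := by
      rw [hWdef, Matrix.star_mul, star_star, hVdef]
      conv_lhs => rw [Matrix.IsHermitian.spectral_theorem hA]
      simp only [Unitary.conjStarAlgAut_apply, Matrix.mul_assoc]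
      rfl
    rw [hspec, Matrix.mul_assoc, Matrix.mul_apply]
    have : ∀ j, (star W) i j * (Matrix.diagonal (Complex.ofReal ∘ hA.eigenvalues) * W) j i
        = ((Complex.normSq (W j i) * hA.eigenvalues j : ℝ) : ℂ) := by
      intro j
      rw [Matrix.diagonal_mul, Matrix.star_apply, Complex.star_def]
      rw [show ((Complex.normSq (W j i) * hA.eigenvalues j : ℝ) : ℂ)
          = (Complex.normSq (W j i) : ℂ) * (hA.eigenvalues j : ℂ) by push_cast; ring]
      rw [Complex.normSq_eq_conj_mul_self]
      simp only [Function.comp_apply]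
      ring
    rw [Finset.sum_congr rfl (fun j _ => this j)]
    simp only [Matrix.mulVec, dotProduct]
    push_cast
    rfl

end Diag

theorem cot_Pfun_concave_hermitian (n k : ℕ) (hk : 2 ≤ k) (hkn : k ≤ n)
    (B B' : Matrix (Fin n) (Fin n) ℂ)
    (hB : B.IsHermitian) (hB' : B'.IsHermitian)
    (hΓB : (∑ i, arccot (hB.eigenvalues i)) < π)
    (hΓB' : (∑ i, arccot (hB'.eigenvalues i)) < π)
    (s : ℝ) (hs0 : 0 ≤ s) (hs1 : s ≤ 1)
    (hC : (s • B + (1 - s) • B').IsHermitian) :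
    s * Real.cot (Pfun n k hB.eigenvalues) + (1 - s) * Real.cot (Pfun n k hB'.eigenvalues) ≤
      Real.cot (Pfun n k hC.eigenvalues) := by
  have hm : k - 1 ≤ Fintype.card (Fin n) := by simp; omega
  have hm1 : 1 ≤ k - 1 := by omega
  set U := (Matrix.IsHermitian.eigenvectorUnitary hC : Matrix (Fin n) (Fin n) ℂ) with hUdef
  have hU : U ∈ Matrix.unitaryGroup (Fin n) ℂ := (Matrix.IsHermitian.eigenvectorUnitary hC).2
  obtain ⟨Db, hDb, hdb⟩ := diag_doublyStochastic hB U hU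
  obtain ⟨Db', hDb', hdb'⟩ := diag_doublyStochastic hB' U hU
  set db := Db *ᵥ hB.eigenvalues with hdbdef
  set db' := Db' *ᵥ hB'.eigenvalues with hdb'def
  -- eigenvalues of C are the convex combination of the diagonals
  have hdiagC : star U * (s • B + (1 - s) • B') * U
      = Matrix.diagonal (Complex.ofReal ∘ hC.eigenvalues) :=
    by have h := Matrix.IsHermitian.conjStarAlgAut_star_eigenvectorUnitary hC
       rw [Unitary.conjStarAlgAut_star_apply] at h; exact h
  have hexp : star U * (s • B + (1 - s) • B') * U
      = s • (star U * B * U) + (1 - s) • (star U * B' * U) := by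
    rw [Matrix.mul_add, Matrix.add_mul]
    rw [Matrix.mul_smul, Matrix.smul_mul, Matrix.mul_smul, Matrix.smul_mul]
  have hev : ∀ i, hC.eigenvalues i = s * db i + (1 - s) * db' i := by
    intro i
    have h1 : ((hC.eigenvalues i : ℝ) : ℂ) = s • ((db i : ℝ) : ℂ) + (1 - s) • ((db' i : ℝ) : ℂ) := by
      have := congrFun (congrFun (hdiagC.symm.trans hexp) i) i
      simpa [Matrix.diagonal_apply_eq, Matrix.add_apply, Matrix.smul_apply, hdb i, hdb' i]
        using this
    have h2 : ((hC.eigenvalues i : ℝ) : ℂ) = ((s * db i + (1 - s) * db' i : ℝ) : ℂ) := by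
      rw [h1]
      push_cast [Complex.real_smul]
      ring
    exact_mod_cast h2
  have hevfun : hC.eigenvalues = s • db + (1 - s) • db' := by
    funext i
    simp [hev i, smul_eq_mul]
  -- memberships
  have hμB : hB.eigenvalues ∈ Omega (Finset.univ : Finset (Fin n)) := hΓB
  have hμB' : hB'.eigenvalues ∈ Omega (Finset.univ : Finset (Fin n)) := hΓB'
  obtain ⟨hdbΩ, hdble⟩ := ds_step (k-1) hm hm1 hDb hμB
  obtain ⟨hdb'Ω, hdb'le⟩ := ds_step (k-1) hm hm1 hDb' hμB'
  have huniv : (Finset.univ : Finset (Fin n)).Nonempty := by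
    have : Nonempty (Fin n) := ⟨⟨0, by omega⟩⟩
    exact Finset.univ_nonempty
  have hconvU : Convex ℝ (Omega (Finset.univ : Finset (Fin n))) := (main_ind _ huniv).1
  have hevΩ : hC.eigenvalues ∈ Omega (Finset.univ : Finset (Fin n)) := by
    rw [hevfun]
    exact hconvU hdbΩ hdb'Ω hs0 (by linarith) (by ring)
  have hΓC : (∑ i, arccot (hC.eigenvalues i)) < π := hevΩ
  -- the concavity inequality
  have hconc := (concaveOn_Fmin (k-1) hm hm1).2 hdbΩ hdb'Ω hs0 (by linarith : (0:ℝ) ≤ 1 - s)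
    (by ring)
  rw [cot_Pfun_eq_Fmin hk hkn _ hΓB, cot_Pfun_eq_Fmin hk hkn _ hΓB',
    cot_Pfun_eq_Fmin hk hkn _ hΓC]
  have e1 : Fmin (k-1) hm hC.eigenvalues = Fmin (k-1) hm (s • db + (1-s) • db') := by
    rw [hevfun]
  calc s * Fmin (k-1) (by simp; omega) hB.eigenvalues
        + (1 - s) * Fmin (k-1) (by simp; omega) hB'.eigenvalues
      ≤ s * Fmin (k-1) hm db + (1 - s) * Fmin (k-1) hm db' := by
        have g1 := mul_le_mul_of_nonneg_left hdble hs0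
        have g2 := mul_le_mul_of_nonneg_left hdb'le (by linarith : (0:ℝ) ≤ 1 - s)
        exact add_le_add g1 g2
    _ ≤ Fmin (k-1) hm (s • db + (1-s) • db') := by
        simpa [smul_eq_mul] using hconc
    _ = Fmin (k-1) (by simp; omega) hC.eigenvalues := e1.symm
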